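/- Let n ≥ k ≥ 4 be integers and x_1,…,x_k positive integers with x_1+⋯+x_k = n. Then x_1x_2 + x_2x_3 + ⋯ + x_{k-1}x_k ≤ ⌊(n-k+4)/2⌋·⌈(n-k+4)/2⌉ + k - 5. -/

import Mathlib

lemma key_ab (a b : ℕ) : a * b ≤ ((a+b)/2) * ((a+b+1)/2) := by
  rcases Nat.even_or_odd (a + b) with h | h
  · obtain ⟨p, hp⟩ := h
    have h1 : (a+b)/2 = p := by omega
    have h2 : (a+b+1)/2 = p := by omega
    rw [h1, h2]; zify; nlinarith [sq_nonneg ((a:ℤ) - b)]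
  · obtain ⟨p, hp⟩ := h
    have h1 : (a+b)/2 = p := by omega
    have h2 : (a+b+1)/2 = p+1 := by omega
    rw [h1, h2]; zify; nlinarith [sq_nonneg ((a:ℤ) - b)]

/-- consecutive products bounded by odd-sum times even-sum -/
lemma consec_le_odd_even (k : ℕ) (y : ℕ → ℕ) :
    ∑ i ∈ Finset.Icc 1 (k - 1), y i * y (i + 1) ≤
      (∑ i ∈ (Finset.Icc 1 k).filter (fun i => i % 2 = 1), y i) *
      (∑ i ∈ (Finset.Icc 1 k).filter (fun i => ¬ i % 2 = 1), y i) := by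
  classical
  set O := (Finset.Icc 1 k).filter (fun i => i % 2 = 1) with hO
  set Ev := (Finset.Icc 1 k).filter (fun i => ¬ i % 2 = 1) with hEv
  set φ : ℕ → ℕ × ℕ := fun i => if i % 2 = 1 then (i, i+1) else (i+1, i) with hφ
  have hinj : ∀ a ∈ Finset.Icc 1 (k-1), ∀ b ∈ Finset.Icc 1 (k-1), φ a = φ b → a = b := by
    intro a _ b _ hab
    simp only [hφ] at hab
    split_ifs at hab <;> rw [Prod.mk.injEq] at hab <;> omega
  have hsub : (Finset.Icc 1 (k-1)).image φ ⊆ O ×ˢ Ev := by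
    intro p hp
    simp only [Finset.mem_image] at hp
    obtain ⟨i, hi, rfl⟩ := hp
    simp only [Finset.mem_Icc] at hi
    by_cases hpar : i % 2 = 1
    · simp only [hφ, if_pos hpar, Finset.mem_product, hO, hEv,
        Finset.mem_filter, Finset.mem_Icc]
      omega
    · simp only [hφ, if_neg hpar, Finset.mem_product, hO, hEv,
        Finset.mem_filter, Finset.mem_Icc]
      omega
  calc ∑ i ∈ Finset.Icc 1 (k - 1), y i * y (i + 1)
      = ∑ i ∈ Finset.Icc 1 (k - 1), y (φ i).1 * y (φ i).2 := by
        refine Finset.sum_congr rfl fun i _ => ?_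
        by_cases hpar : i % 2 = 1 <;> simp [hφ, hpar, Nat.mul_comm]
    _ = ∑ p ∈ (Finset.Icc 1 (k-1)).image φ, y p.1 * y p.2 := by
        rw [Finset.sum_image hinj]
    _ ≤ ∑ p ∈ O ×ˢ Ev, y p.1 * y p.2 :=
        Finset.sum_le_sum_of_subset hsub
    _ = (∑ i ∈ O, y i) * (∑ i ∈ Ev, y i) := by
        rw [Finset.sum_product, Finset.sum_mul_sum]

theorem path_form_upper_bound (n k : ℕ) (hk : 4 ≤ k) (hn : k ≤ n) (x : ℕ → ℕ)
    (hpos : ∀ i ∈ Finset.Icc 1 k, 0 < x i)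
    (hsum : ∑ i ∈ Finset.Icc 1 k, x i = n) :
    ∑ i ∈ Finset.Icc 1 (k - 1), x i * x (i + 1) ≤
      ((n - k + 4) / 2) * ((n - k + 4 + 1) / 2) + k - 5 := by
  classical
  set y : ℕ → ℕ := fun i => x i - 1 with hy
  have hxy : ∀ i ∈ Finset.Icc 1 k, x i = y i + 1 := by
    intro i hi; have := hpos i hi; simp [hy]; omega
  -- sum of y
  have hEsum : ∑ i ∈ Finset.Icc 1 k, y i = n - k := by
    have h1 : ∑ i ∈ Finset.Icc 1 k, (y i + 1) = n := by
      rw [← hsum]; exact Finset.sum_congr rfl fun i hi => (hxy i hi).symm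
    rw [Finset.sum_add_distrib, Finset.sum_const, Nat.card_Icc, smul_eq_mul, mul_one] at h1
    omega
  -- expand the main sum
  have key : ∑ i ∈ Finset.Icc 1 (k - 1), x i * x (i + 1)
      = (∑ i ∈ Finset.Icc 1 (k-1), y i * y (i+1))
        + (∑ i ∈ Finset.Icc 1 (k-1), y i)
        + (∑ i ∈ Finset.Icc 1 (k-1), y (i+1)) + (k - 1) := by
    have h1 : ∀ i ∈ Finset.Icc 1 (k-1),
        x i * x (i+1) = y i * y (i+1) + (y i + (y (i+1) + 1)) := by
      intro i hi
      simp only [Finset.mem_Icc] at hi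
      rw [hxy i (by simp only [Finset.mem_Icc]; omega),
          hxy (i+1) (by simp only [Finset.mem_Icc]; omega)]
      ring
    rw [Finset.sum_congr rfl h1, Finset.sum_add_distrib, Finset.sum_add_distrib,
      Finset.sum_add_distrib, Finset.sum_const, Nat.card_Icc, smul_eq_mul, mul_one]
    omega
  -- bounds on the linear sums
  have h2 : ∑ i ∈ Finset.Icc 1 (k-1), y i ≤ n - k := by
    rw [← hEsum]
    exact Finset.sum_le_sum_of_subset (Finset.Icc_subset_Icc (le_refl 1) (by omega))
  have h3 : ∑ i ∈ Finset.Icc 1 (k-1), y (i+1) ≤ n - k := by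
    have him : ∑ i ∈ Finset.Icc 1 (k-1), y (i+1)
        = ∑ j ∈ (Finset.Icc 1 (k-1)).image (· + 1), y j := by
      rw [Finset.sum_image (by intro a _ b _ h; simp only at h; omega)]
    rw [him, ← hEsum]
    refine Finset.sum_le_sum_of_subset ?_
    intro j hj
    simp only [Finset.mem_image, Finset.mem_Icc] at hj ⊢
    omega
  -- odd/even split
  set A := ∑ i ∈ (Finset.Icc 1 k).filter (fun i => i % 2 = 1), y i with hA
  set B := ∑ i ∈ (Finset.Icc 1 k).filter (fun i => ¬ i % 2 = 1), y i with hB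
  have hAB : A + B = n - k := by
    rw [hA, hB, Finset.sum_filter_add_sum_filter_not, hEsum]
  have h1 : ∑ i ∈ Finset.Icc 1 (k-1), y i * y (i+1) ≤ A * B :=
    consec_le_odd_even k y
  have h4 : A * B ≤ ((n-k)/2) * ((n-k+1)/2) := by
    have := key_ab A B
    rwa [hAB] at this
  -- final arithmetic
  have hP : ((n-k+4)/2) * ((n-k+4+1)/2) = ((n-k)/2) * ((n-k+1)/2) + 2*(n-k) + 4 := by
    have e1 : (n-k+4)/2 = (n-k)/2 + 2 := by omega
    have e2 : (n-k+4+1)/2 = (n-k+1)/2 + 2 := by omega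
    have e3 : (n-k)/2 + (n-k+1)/2 = n-k := by omega
    rw [e1, e2]
    ring_nf
    omega
  omega
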